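/- Let f, g : ℝ² → ℝ be C¹ with ∂f/∂x < 0 and ∂g/∂y < 0 everywhere on the open positive quadrant (intraspecific competition for both species). Let γ : [0,1] → (0,∞)×(0,∞) be a C¹ curve with γ'(t) ≠ 0 and ∇f(γ(t)) ≠ 0 and f(γ(t)) = 0 for all t, with g(γ(0)) = g(γ(1)) = 0, g(γ(t)) ≠ 0 on (0,1), and nonzero derivatives of t ↦ g(γ(t)) at t = 0 and t = 1. Then exactly one of the two equilibria γ(0), γ(1) is an attractive node (all eigenvalues of its Jacobian have negative real part) and the other is a saddle point (its Jacobian has real eigenvalues of opposite sign): attractive nodes and saddle points alternate along the isoclines (Corollary 3.2). -/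

import Mathlib

open Set Polynomial

/-- Partial derivative with respect to the first coordinate. -/
noncomputable def pdx (f : ℝ × ℝ → ℝ) (p : ℝ × ℝ) : ℝ := fderiv ℝ f p (1, 0)

/-- Partial derivative with respect to the second coordinate. -/
noncomputable def pdy (f : ℝ × ℝ → ℝ) (p : ℝ × ℝ) : ℝ := fderiv ℝ f p (0, 1)

/-- The Jacobian of the system ẋ = x f(x,y), ẏ = y g(x,y) at an equilibrium p. -/
noncomputable def jac (f g : ℝ × ℝ → ℝ) (p : ℝ × ℝ) : Matrix (Fin 2) (Fin 2) ℝ :=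
  !![p.1 * pdx f p, p.1 * pdy f p; p.2 * pdx g p, p.2 * pdy g p]

/-- An attractive node: all eigenvalues of the Jacobian have negative real part. -/
def IsAttractiveNode (f g : ℝ × ℝ → ℝ) (p : ℝ × ℝ) : Prop :=
  ∀ μ : ℂ, (((jac f g p).map Complex.ofReal).charpoly).IsRoot μ → μ.re < 0

/-- A saddle point: the Jacobian has two real eigenvalues of opposite sign. -/
def IsSaddlePoint (f g : ℝ × ℝ → ℝ) (p : ℝ × ℝ) : Prop :=
  ∃ l₁ l₂ : ℝ, l₁ < 0 ∧ 0 < l₂ ∧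
    ((jac f g p).charpoly).IsRoot l₁ ∧ ((jac f g p).charpoly).IsRoot l₂

section Aux

open Filter Topology

theorem eval_charpoly_fin_two {R : Type*} [CommRing R] (M : Matrix (Fin 2) (Fin 2) R) (μ : R) :
    eval μ M.charpoly = (μ - M 0 0) * (μ - M 1 1) - M 0 1 * M 1 0 := by
  rw [Matrix.charpoly, Matrix.det_fin_two]
  simp [Matrix.charmatrix_apply_eq, Matrix.charmatrix_apply_ne _ _ _ (by decide : (0 : Fin 2) ≠ 1),
    Matrix.charmatrix_apply_ne _ _ _ (by decide : (1 : Fin 2) ≠ 0)]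

theorem node_aux (A B C D : ℝ) (htr : A + D < 0) (hdet : 0 < A*D - B*C) (μ : ℂ)
    (h : (μ - (A:ℂ)) * (μ - (D:ℂ)) - (B:ℂ)*(C:ℂ) = 0) : μ.re < 0 := by
  rw [Complex.ext_iff] at h
  simp only [Complex.mul_re, Complex.mul_im, Complex.sub_re, Complex.sub_im,
    Complex.ofReal_re, Complex.ofReal_im, Complex.zero_re, Complex.zero_im] at h
  obtain ⟨hre, him⟩ := h
  by_contra hc
  push_neg at hc
  have him' : μ.im * (2*μ.re - (A+D)) = 0 := by linear_combination him
  rcases mul_eq_zero.mp him' with hy | h2x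
  · rw [hy] at hre
    nlinarith [mul_nonneg hc hc, mul_nonneg (neg_nonneg.mpr htr.le) hc]
  · linarith

theorem saddle_aux (A B C D : ℝ) (hdet : A*D - B*C < 0) :
    ∃ l₁ l₂ : ℝ, l₁ < 0 ∧ 0 < l₂ ∧ (l₁ - A)*(l₁ - D) - B*C = 0 ∧ (l₂ - A)*(l₂ - D) - B*C = 0 := by
  set s := Real.sqrt ((A+D)^2 - 4*(A*D - B*C)) with hs
  have hDisc : 0 ≤ (A+D)^2 - 4*(A*D-B*C) := by nlinarith [sq_nonneg (A+D)]
  have hs2 : s^2 = (A+D)^2 - 4*(A*D-B*C) := Real.sq_sqrt hDisc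
  have hsnn : 0 ≤ s := Real.sqrt_nonneg _
  have habs : |A+D| < s := by
    by_contra hcon
    push_neg at hcon
    have h1 := mul_self_le_mul_self hsnn hcon
    have h2 := sq_abs (A+D)
    nlinarith
  refine ⟨(A+D-s)/2, (A+D+s)/2, ?_, ?_, ?_, ?_⟩
  · have := le_abs_self (A+D); linarith
  · have := neg_abs_le (A+D); linarith
  · linear_combination (1/4) * hs2
  · linear_combination (1/4) * hs2

theorem fderiv_pair_apply (F : ℝ × ℝ → ℝ) (p w : ℝ × ℝ) :
    fderiv ℝ F p w = w.1 * pdx F p + w.2 * pdy F p := by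
  have hw : w = w.1 • ((1:ℝ), (0:ℝ)) + w.2 • ((0:ℝ), (1:ℝ)) := by
    ext <;> simp
  rw [pdx, pdy]
  conv_lhs => rw [hw]
  rw [map_add, map_smul, map_smul]
  simp [smul_eq_mul]

theorem deriv_comp_pair (F : ℝ × ℝ → ℝ) (hF : ContDiff ℝ 1 F) (γ : ℝ → ℝ × ℝ)
    (hγ : ContDiff ℝ 1 γ) (t : ℝ) :
    deriv (fun s => F (γ s)) t = (deriv γ t).1 * pdx F (γ t) + (deriv γ t).2 * pdy F (γ t) := by
  have h1 : HasFDerivAt F (fderiv ℝ F (γ t)) (γ t) := (hF.differentiable one_ne_zero (γ t)).hasFDerivAt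
  have h2 : HasDerivAt γ (deriv γ t) t := (hγ.differentiable one_ne_zero t).hasDerivAt
  have h3 := (h1.comp_hasDerivAt t h2).deriv
  simp only [Function.comp_def] at h3
  rw [h3, fderiv_pair_apply]

theorem deriv_nonneg_right (h : ℝ → ℝ) (hd : DifferentiableAt ℝ h 0) (h0 : h 0 = 0)
    (hpos : ∀ t ∈ Ioo (0:ℝ) 1, 0 ≤ h t) : 0 ≤ deriv h 0 := by
  have H : HasDerivWithinAt h (deriv h 0) (Ioi 0) 0 := hd.hasDerivAt.hasDerivWithinAt
  rw [hasDerivWithinAt_iff_tendsto_slope] at H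
  have hdiff : (Ioi (0:ℝ)) \ {0} = Ioi 0 := diff_singleton_eq_self (by simp)
  rw [hdiff] at H
  have hmem : Ioo (0:ℝ) 1 ∈ 𝓝[>] (0:ℝ) := Ioo_mem_nhdsGT_of_mem ⟨le_refl 0, by norm_num⟩
  refine ge_of_tendsto H ?_
  filter_upwards [hmem] with t ht
  rw [slope_def_field, h0]
  exact div_nonneg (by linarith [hpos t ht]) (by linarith [ht.1])

theorem deriv_nonpos_left (h : ℝ → ℝ) (hd : DifferentiableAt ℝ h 1) (h1 : h 1 = 0)
    (hpos : ∀ t ∈ Ioo (0:ℝ) 1, 0 ≤ h t) : deriv h 1 ≤ 0 := by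
  have H : HasDerivWithinAt h (deriv h 1) (Iio 1) 1 := hd.hasDerivAt.hasDerivWithinAt
  rw [hasDerivWithinAt_iff_tendsto_slope] at H
  have hdiff : (Iio (1:ℝ)) \ {1} = Iio 1 := diff_singleton_eq_self (by simp)
  rw [hdiff] at H
  have hmem : Ioo (0:ℝ) 1 ∈ 𝓝[<] (1:ℝ) := Ioo_mem_nhdsLT_of_mem ⟨by norm_num, le_refl 1⟩
  refine le_of_tendsto H ?_
  filter_upwards [hmem] with t ht
  rw [slope_def_field, h1]
  have h2' : t - 1 < 0 := by linarith [ht.2]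
  exact div_nonpos_of_nonneg_of_nonpos (by linarith [hpos t ht]) h2'.le

theorem no_sign_change (h : ℝ → ℝ) (hc : Continuous h) {S : Set ℝ} (hS : OrdConnected S)
    (hne : ∀ t ∈ S, h t ≠ 0) {s t : ℝ} (hs : s ∈ S) (ht : t ∈ S) (hpos : 0 < h s) : 0 < h t := by
  by_contra hcon
  push_neg at hcon
  have hneg : h t < 0 := lt_of_le_of_ne hcon (hne t ht)
  rcases le_total s t with hle | hle
  · have hsub := intermediate_value_Icc' hle hc.continuousOn
    obtain ⟨c, hc1, hc2⟩ := hsub (⟨hneg.le, hpos.le⟩ : (0:ℝ) ∈ Icc (h t) (h s))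
    exact hne c (hS.out hs ht hc1) hc2
  · have hsub := intermediate_value_Icc hle hc.continuousOn
    obtain ⟨c, hc1, hc2⟩ := hsub (⟨hneg.le, hpos.le⟩ : (0:ℝ) ∈ Icc (h t) (h s))
    exact hne c (hS.out ht hs hc1) hc2

theorem deriv_prod_neg (h : ℝ → ℝ) (hd : Differentiable ℝ h) (h0 : h 0 = 0) (h1 : h 1 = 0)
    (hne : ∀ t ∈ Ioo (0:ℝ) 1, h t ≠ 0) (d0 : deriv h 0 ≠ 0) (d1 : deriv h 1 ≠ 0) :
    deriv h 0 * deriv h 1 < 0 := by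
  have hhalf : (1/2:ℝ) ∈ Ioo (0:ℝ) 1 := by norm_num
  have hcont : Continuous h := hd.continuous
  rcases (hne _ hhalf).lt_or_gt with hneg | hpos
  · -- h negative on (0,1)
    have hall : ∀ t ∈ Ioo (0:ℝ) 1, 0 ≤ -h t := fun t ht =>
      (no_sign_change (fun u => -h u) hcont.neg ordConnected_Ioo
        (fun u hu => neg_ne_zero.mpr (hne u hu)) hhalf ht (by linarith)).le
    have e0 : 0 ≤ deriv (fun u => -h u) 0 :=
      deriv_nonneg_right _ (hd 0).neg (by simp [h0]) hall
    have e1 : deriv (fun u => -h u) 1 ≤ 0 :=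
      deriv_nonpos_left _ (hd 1).neg (by simp [h1]) hall
    rw [deriv.fun_neg] at e0 e1
    have : deriv h 0 < 0 := lt_of_le_of_ne (by linarith) d0
    have : 0 < deriv h 1 := lt_of_le_of_ne (by linarith) (Ne.symm d1)
    exact mul_neg_of_neg_of_pos (by linarith) this
  · have hall : ∀ t ∈ Ioo (0:ℝ) 1, 0 ≤ h t := fun t ht =>
      (no_sign_change h hcont ordConnected_Ioo hne hhalf ht hpos).le
    have e0 : 0 ≤ deriv h 0 := deriv_nonneg_right _ (hd 0) h0 hall
    have e1 : deriv h 1 ≤ 0 := deriv_nonpos_left _ (hd 1) h1 hall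
    exact mul_neg_of_pos_of_neg (lt_of_le_of_ne e0 (Ne.symm d0)) (lt_of_le_of_ne e1 d1)

theorem node_of (f g : ℝ × ℝ → ℝ) (p : ℝ × ℝ) (hx : 0 < p.1) (hy : 0 < p.2)
    (ha : pdx f p < 0) (hd : pdy g p < 0)
    (hdet : 0 < pdx f p * pdy g p - pdy f p * pdx g p) : IsAttractiveNode f g p := by
  intro μ hμ
  rw [IsRoot, eval_charpoly_fin_two] at hμ
  have hμ' : (μ - ((p.1 * pdx f p : ℝ) : ℂ)) * (μ - ((p.2 * pdy g p : ℝ) : ℂ)) -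
      ((p.1 * pdy f p : ℝ) : ℂ) * ((p.2 * pdx g p : ℝ) : ℂ) = 0 := by
    simpa [jac, Matrix.map_apply] using hμ
  refine node_aux _ _ _ _ ?_ ?_ μ hμ'
  · nlinarith [mul_neg_of_pos_of_neg hx ha, mul_neg_of_pos_of_neg hy hd]
  · have heq : p.1 * pdx f p * (p.2 * pdy g p) - p.1 * pdy f p * (p.2 * pdx g p)
        = (p.1 * p.2) * (pdx f p * pdy g p - pdy f p * pdx g p) := by ring
    rw [heq]
    exact mul_pos (mul_pos hx hy) hdet

theorem saddle_of (f g : ℝ × ℝ → ℝ) (p : ℝ × ℝ) (hx : 0 < p.1) (hy : 0 < p.2)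
    (hdet : pdx f p * pdy g p - pdy f p * pdx g p < 0) : IsSaddlePoint f g p := by
  have hdet' : p.1 * pdx f p * (p.2 * pdy g p) - p.1 * pdy f p * (p.2 * pdx g p) < 0 := by
    have heq : p.1 * pdx f p * (p.2 * pdy g p) - p.1 * pdy f p * (p.2 * pdx g p)
        = (p.1 * p.2) * (pdx f p * pdy g p - pdy f p * pdx g p) := by ring
    rw [heq]
    exact mul_neg_of_pos_of_neg (mul_pos hx hy) hdet
  obtain ⟨l₁, l₂, h1, h2, e1, e2⟩ :=
    saddle_aux (p.1 * pdx f p) (p.1 * pdy f p) (p.2 * pdx g p) (p.2 * pdy g p) hdet'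
  refine ⟨l₁, l₂, h1, h2, ?_, ?_⟩
  · rw [IsRoot, eval_charpoly_fin_two]
    simpa [jac] using e1
  · rw [IsRoot, eval_charpoly_fin_two]
    simpa [jac] using e2

end Aux

/-- Corollary 3.2: under intraspecific competition for both species, attractive
nodes and saddle points alternate along the isoclines. -/
theorem attractive_saddle_alternation
    (f g : ℝ × ℝ → ℝ) (hf : ContDiff ℝ 1 f) (hg : ContDiff ℝ 1 g)
    (hcomp : ∀ p : ℝ × ℝ, 0 < p.1 → 0 < p.2 → pdx f p < 0 ∧ pdy g p < 0)
    (γ : ℝ → ℝ × ℝ) (hγ : ContDiff ℝ 1 γ)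
    (hpos : ∀ t ∈ Icc (0:ℝ) 1, 0 < (γ t).1 ∧ 0 < (γ t).2)
    (hγ' : ∀ t ∈ Icc (0:ℝ) 1, deriv γ t ≠ 0)
    (hgrad : ∀ t ∈ Icc (0:ℝ) 1, fderiv ℝ f (γ t) ≠ 0)
    (hiso : ∀ t ∈ Icc (0:ℝ) 1, f (γ t) = 0)
    (hg0 : g (γ 0) = 0) (hg1 : g (γ 1) = 0)
    (hgne : ∀ t ∈ Ioo (0:ℝ) 1, g (γ t) ≠ 0)
    (htrans0 : deriv (fun t => g (γ t)) 0 ≠ 0)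
    (htrans1 : deriv (fun t => g (γ t)) 1 ≠ 0) :
    (IsAttractiveNode f g (γ 0) ∧ IsSaddlePoint f g (γ 1)) ∨
    (IsSaddlePoint f g (γ 0) ∧ IsAttractiveNode f g (γ 1)) := by
  have h01 : (0:ℝ) ∈ Icc (0:ℝ) 1 := ⟨le_refl 0, zero_le_one⟩
  have h11 : (1:ℝ) ∈ Icc (0:ℝ) 1 := ⟨zero_le_one, le_refl 1⟩
  -- the derivative of f along γ vanishes on [0,1]
  have hFzero : ∀ t ∈ Icc (0:ℝ) 1,
      (deriv γ t).1 * pdx f (γ t) + (deriv γ t).2 * pdy f (γ t) = 0 := by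
    intro t ht
    rw [← deriv_comp_pair f hf γ hγ t]
    have hdiff : DifferentiableAt ℝ (fun s => f (γ s)) t := (hf.comp hγ).differentiable one_ne_zero t
    have hud := (uniqueDiffOn_Icc one_pos) t ht
    rw [← hdiff.derivWithin hud, derivWithin_congr (fun y hy => hiso y hy) (hiso t ht)]
    exact congrFun (derivWithin_fun_const _ _) t
  -- the second component of γ' never vanishes on [0,1]
  have hv : ∀ t ∈ Icc (0:ℝ) 1, (deriv γ t).2 ≠ 0 := by
    intro t ht hv0
    have ha := (hcomp (γ t) (hpos t ht).1 (hpos t ht).2).1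
    have h := hFzero t ht
    rw [hv0] at h
    simp only [zero_mul, add_zero] at h
    have hu : (deriv γ t).1 = 0 := by
      rcases mul_eq_zero.mp h with h' | h'
      · exact h'
      · exact absurd h' ha.ne
    exact hγ' t ht (Prod.ext hu hv0)
  -- γ'₂ has the same sign at both endpoints
  have hcv : Continuous fun t => (deriv γ t).2 := (hγ.continuous_deriv le_rfl).snd
  have hvprod : 0 < (deriv γ 0).2 * (deriv γ 1).2 := by
    rcases (hv 0 h01).lt_or_gt with hneg | hposv
    · have hh := no_sign_change (fun t => -(deriv γ t).2) hcv.neg ordConnected_Icc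
        (fun u hu => neg_ne_zero.mpr (hv u hu)) h01 h11 (neg_pos.mpr hneg)
      have hh' : 0 < -(deriv γ 1).2 := hh
      exact mul_pos_of_neg_of_neg hneg (by linarith)
    · have hh := no_sign_change _ hcv ordConnected_Icc hv h01 h11 hposv
      exact mul_pos hposv hh
  -- the derivative of g along γ has opposite signs at the endpoints
  have hGd : Differentiable ℝ (fun t => g (γ t)) := (hg.comp hγ).differentiable one_ne_zero
  have hGprod : deriv (fun t => g (γ t)) 0 * deriv (fun t => g (γ t)) 1 < 0 :=
    deriv_prod_neg _ hGd hg0 hg1 hgne htrans0 htrans1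
  -- determinant relation
  have key : ∀ t ∈ Icc (0:ℝ) 1,
      (deriv γ t).2 * (pdx f (γ t) * pdy g (γ t) - pdy f (γ t) * pdx g (γ t))
        = pdx f (γ t) * deriv (fun s => g (γ s)) t := by
    intro t ht
    rw [deriv_comp_pair g hg γ hγ t]
    linear_combination (-(pdx g (γ t))) * hFzero t ht
  have ha0 := (hcomp (γ 0) (hpos 0 h01).1 (hpos 0 h01).2).1
  have hd0 := (hcomp (γ 0) (hpos 0 h01).1 (hpos 0 h01).2).2
  have ha1 := (hcomp (γ 1) (hpos 1 h11).1 (hpos 1 h11).2).1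
  have hd1 := (hcomp (γ 1) (hpos 1 h11).1 (hpos 1 h11).2).2
  set D0 := pdx f (γ 0) * pdy g (γ 0) - pdy f (γ 0) * pdx g (γ 0) with hD0
  set D1 := pdx f (γ 1) * pdy g (γ 1) - pdy f (γ 1) * pdx g (γ 1) with hD1
  have k0 := key 0 h01
  have k1 := key 1 h11
  have hkk : ((deriv γ 0).2 * (deriv γ 1).2) * (D0 * D1)
      = (pdx f (γ 0) * pdx f (γ 1)) * (deriv (fun s => g (γ s)) 0 * deriv (fun s => g (γ s)) 1) := by
    linear_combination ((deriv γ 1).2 * D1) * k0 + (pdx f (γ 0) * deriv (fun s => g (γ s)) 0) * k1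
  have hrhs : (pdx f (γ 0) * pdx f (γ 1)) *
      (deriv (fun s => g (γ s)) 0 * deriv (fun s => g (γ s)) 1) < 0 :=
    mul_neg_of_pos_of_neg (mul_pos_of_neg_of_neg ha0 ha1) hGprod
  have hDprod : D0 * D1 < 0 := by
    by_contra hcon
    push_neg at hcon
    nlinarith [mul_nonneg hvprod.le hcon]
  have hD0ne : D0 ≠ 0 := by
    intro h0
    rw [h0] at hDprod
    simp at hDprod
  rcases hD0ne.lt_or_gt with hD0neg | hD0pos
  · -- D0 < 0 : saddle at γ 0, node at γ 1
    have hD1pos : 0 < D1 := by nlinarith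
    exact Or.inr ⟨saddle_of f g (γ 0) (hpos 0 h01).1 (hpos 0 h01).2 hD0neg,
      node_of f g (γ 1) (hpos 1 h11).1 (hpos 1 h11).2 ha1 hd1 hD1pos⟩
  · have hD1neg : D1 < 0 := by nlinarith
    exact Or.inl ⟨node_of f g (γ 0) (hpos 0 h01).1 (hpos 0 h01).2 ha0 hd0 hD0pos,
      saddle_of f g (γ 1) (hpos 1 h11).1 (hpos 1 h11).2 hD1neg⟩
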